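/- For every d ∈ ℕ, every Borel set A ⊆ [0,1]^d, and every subset K ⊆ [d], the cylinder [A]_K is Lebesgue measurable (i.e., it lies in the completion of the Borel σ-algebra of [0,1]^d with respect to Lebesgue measure). -/

import Mathlib

open MeasureTheory unitInterval

/-- `cyl A K` is the maximal cylinder subset of `A` that is free in the coordinates
outside `K`: the set of `ω` such that every `ω'` agreeing with `ω` on `K` lies in `A`. -/
def cyl {ι S : Type*} (A : Set (ι → S)) (K : Set ι) : Set (ι → S) :=
  {ω | ∀ ω' : ι → S, (∀ i ∈ K, ω' i = ω i) → ω' ∈ A}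

/-- The BKR combination `A □ B := ⋃_{K ⊆ [d]} ([A]_K ∩ [B]_{Kᶜ})`. -/
def bkr {ι S : Type*} (A B : Set (ι → S)) : Set (ι → S) :=
  ⋃ K : Set ι, cyl A K ∩ cyl B Kᶜ

/-- The simultaneous `r`-fold BKR combination: union over pairwise disjoint
`J_1, …, J_r` of `⋂ i, [A i]_{J i}`. -/
def bkrMulti {ι S : Type*} (r : ℕ) (A : Fin r → Set (ι → S)) : Set (ι → S) :=
  ⋃ (J : Fin r → Set ι) (_ : Pairwise (Function.onFun Disjoint J)), ⋂ i, cyl (A i) (J i)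

open scoped ENNReal NNReal

section Aux

open Set Filter Topology

/-- Extract an approximate witness from a supremum bound in `ℝ≥0∞`. -/
lemma exists_le_add_of_le_iSup_add {g : ℕ → ℝ≥0∞} {a c δ : ℝ≥0∞}
    (h : a ≤ (⨆ j, g j) + c) (hδ : δ ≠ 0) (htop : (⨆ j, g j) ≠ ⊤) :
    ∃ j, a ≤ g j + (c + δ) := by
  have key : ∃ j, (⨆ j, g j) ≤ g j + δ := by
    by_cases hδtop : δ = ⊤
    · refine ⟨0, ?_⟩
      simp [hδtop]
    by_cases hs0 : (⨆ j, g j) = 0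
    · exact ⟨0, by simp [hs0]⟩
    obtain ⟨j, hj⟩ := lt_iSup_iff.1 (ENNReal.sub_lt_self htop hs0 hδ)
    exact ⟨j, tsub_le_iff_right.1 hj.le⟩
  obtain ⟨j, hj⟩ := key
  refine ⟨j, ?_⟩
  calc a ≤ (⨆ j, g j) + c := h
    _ ≤ (g j + δ) + c := by gcongr
    _ = g j + (c + δ) := by rw [add_assoc, add_comm δ c]

variable {X : Type*} [MeasurableSpace X]

open scoped Classical in
/-- Auxiliary choice of a bound at step `k` in the capacitability argument. -/
noncomputable def auxPick (μ : Measure X) (f : (ℕ → ℕ) → X) (m : ℝ≥0∞) (c : ℕ → ℝ≥0∞)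
    (k : ℕ) (s : ℕ → ℕ) : ℕ :=
  if h : ∃ b, m ≤ μ (f '' ({x | ∀ i < k, x i ≤ s i} ∩ {x | x k ≤ b})) + c (k + 1)
  then h.choose else 0

/-- Auxiliary state after `k` steps of the recursive construction. -/
noncomputable def auxState (μ : Measure X) (f : (ℕ → ℕ) → X) (m : ℝ≥0∞) (c : ℕ → ℝ≥0∞) :
    ℕ → ℕ → ℕ
  | 0 => fun _ => 0
  | (k + 1) => Function.update (auxState μ f m c k) k
      (auxPick μ f m c k (auxState μ f m c k))

/-- The sequence of bounds produced by the recursive construction. -/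
noncomputable def auxN (μ : Measure X) (f : (ℕ → ℕ) → X) (m : ℝ≥0∞) (c : ℕ → ℝ≥0∞)
    (k : ℕ) : ℕ :=
  auxState μ f m c (k + 1) k

lemma auxState_eq (μ : Measure X) (f : (ℕ → ℕ) → X) (m : ℝ≥0∞) (c : ℕ → ℝ≥0∞) :
    ∀ k i, i < k → auxState μ f m c k i = auxN μ f m c i := by
  intro k
  induction k with
  | zero => intro i hi; exact absurd hi (Nat.not_lt_zero i)
  | succ k ih =>
    intro i hi
    rcases Nat.lt_succ_iff_lt_or_eq.1 hi with h | rfl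
    · show Function.update (auxState μ f m c k) k _ i = _
      rw [Function.update_of_ne (Nat.ne_of_lt h)]
      exact ih i h
    · rfl

lemma auxE_state (μ : Measure X) (f : (ℕ → ℕ) → X) (m : ℝ≥0∞) (c : ℕ → ℝ≥0∞) (k : ℕ) :
    {x : ℕ → ℕ | ∀ i < k, x i ≤ auxState μ f m c k i}
      = {x : ℕ → ℕ | ∀ i < k, x i ≤ auxN μ f m c i} := by
  ext x
  simp only [Set.mem_setOf_eq]
  constructor
  · intro h i hi
    have := h i hi
    rwa [auxState_eq μ f m c k i hi] at this
  · intro h i hi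
    rw [auxState_eq μ f m c k i hi]
    exact h i hi

lemma aux_invariant (μ : Measure X) [IsFiniteMeasure μ] (f : (ℕ → ℕ) → X)
    (δ : ℕ → ℝ≥0∞) (hδ : ∀ k, δ k ≠ 0) :
    ∀ k, μ (Set.range f) ≤
      μ (f '' {x : ℕ → ℕ | ∀ i < k,
          x i ≤ auxN μ f (μ (Set.range f)) (fun k => ∑ i ∈ Finset.range k, δ i) i})
        + ∑ i ∈ Finset.range k, δ i := by
  set m := μ (Set.range f) with hm
  set c : ℕ → ℝ≥0∞ := fun k => ∑ i ∈ Finset.range k, δ i with hc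
  intro k
  induction k with
  | zero =>
    have huniv : {x : ℕ → ℕ | ∀ i < 0, x i ≤ auxN μ f m c i} = Set.univ := by
      ext x; simp
    rw [huniv, Set.image_univ, Finset.range_zero, Finset.sum_empty, add_zero]
  | succ k ih =>
    set E : Set (ℕ → ℕ) := {x : ℕ → ℕ | ∀ i < k, x i ≤ auxN μ f m c i} with hE
    have hEcup : E = ⋃ j, (E ∩ {x | x k ≤ j}) := by
      ext x
      constructor
      · intro hx
        exact Set.mem_iUnion.2 ⟨x k, hx, show x k ≤ x k from le_rfl⟩
      · intro hx
        obtain ⟨j, hj, -⟩ := Set.mem_iUnion.1 hx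
        exact hj
    have hcup : f '' E = ⋃ j, f '' (E ∩ {x | x k ≤ j}) := by
      rw [← Set.image_iUnion, ← hEcup]
    have hmono : Monotone (fun j => f '' (E ∩ {x | x k ≤ j})) := by
      intro j1 j2 hj
      exact Set.image_mono (Set.inter_subset_inter_right _ fun x hx => le_trans hx hj)
    have hsup : μ (f '' E) = ⨆ j, μ (f '' (E ∩ {x | x k ≤ j})) := by
      rw [hcup]
      exact hmono.measure_iUnion
    have hstop : (⨆ j, μ (f '' (E ∩ {x | x k ≤ j}))) ≠ ⊤ :=
      ne_of_lt (lt_of_le_of_lt (iSup_le fun j => measure_mono (Set.subset_univ _))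
        (measure_lt_top μ Set.univ))
    have hih' : m ≤ (⨆ j, μ (f '' (E ∩ {x | x k ≤ j}))) + c k := by
      rw [← hsup]; exact ih
    obtain ⟨j, hj⟩ := exists_le_add_of_le_iSup_add hih' (hδ k) hstop
    have hex : ∃ b, m ≤
        μ (f '' ({x | ∀ i < k, x i ≤ auxState μ f m c k i} ∩ {x | x k ≤ b})) + c (k + 1) := by
      rw [auxE_state]
      refine ⟨j, ?_⟩
      have hck : c (k + 1) = c k + δ k := Finset.sum_range_succ δ k
      rw [hck]
      exact hj
    have hpick : auxPick μ f m c k (auxState μ f m c k) = hex.choose := by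
      simp only [auxPick]
      rw [dif_pos hex]
    have hspec := hex.choose_spec
    rw [← hpick] at hspec
    rw [auxE_state] at hspec
    have hNk : auxN μ f m c k = auxPick μ f m c k (auxState μ f m c k) := by
      show Function.update (auxState μ f m c k) k _ k = _
      rw [Function.update_self]
    have hEk1 : {x : ℕ → ℕ | ∀ i < k + 1, x i ≤ auxN μ f m c i}
        = E ∩ {x | x k ≤ auxN μ f m c k} := by
      ext x
      simp only [hE, Set.mem_setOf_eq, Set.mem_inter_iff]
      constructor
      · exact fun h => ⟨fun i hi => h i (by omega), h k (by omega)⟩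
      · rintro ⟨h1, h2⟩ i hi
        rcases Nat.lt_succ_iff_lt_or_eq.1 hi with h | rfl
        exacts [h1 i h, h2]
    rw [hEk1, hNk]
    exact hspec

end Aux


/-- In a metric space, an analytic set is null measurable for every finite Borel measure.
This is the classical capacitability / inner regularity argument. -/
theorem analyticSet_nullMeasurableSet {X : Type*} [MetricSpace X] [MeasurableSpace X]
    [OpensMeasurableSpace X] {S : Set X} (hS : AnalyticSet S) (μ : Measure X)
    [IsFiniteMeasure μ] : NullMeasurableSet S μ := by
  rw [AnalyticSet_def] at hS
  rcases hS with rfl | ⟨f, hf, rfl⟩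
  · exact MeasurableSet.empty.nullMeasurableSet
  have claim : ∀ ε : ℝ≥0∞, ε ≠ 0 → ∃ F : Set X, IsClosed F ∧ F ⊆ Set.range f ∧
      μ (Set.range f) ≤ μ F + ε := by
    intro ε hε
    by_cases hεtop : ε = ⊤
    · exact ⟨∅, isClosed_empty, Set.empty_subset _, by simp [hεtop]⟩
    set m := μ (Set.range f) with hm
    set δ : ℕ → ℝ≥0∞ := fun k => ε / 2 ^ (k + 1) with hδdef
    have hδ0 : ∀ k, δ k ≠ 0 := by
      intro k
      simp only [hδdef, ne_eq, ENNReal.div_eq_zero_iff, not_or]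
      exact ⟨hε, ENNReal.pow_ne_top ENNReal.ofNat_ne_top⟩
    set c : ℕ → ℝ≥0∞ := fun k => ∑ i ∈ Finset.range k, δ i with hcdef
    have hcε : ∀ k, c k ≤ ε := by
      intro k
      have h1 : c k ≤ ∑' i, δ i := ENNReal.sum_le_tsum _
      have h2 : ∑' i, δ i = ε := by
        have h3 : ∀ i : ℕ, δ i = ε * 2⁻¹ ^ (i + 1) := by
          intro i
          show ε / 2 ^ (i + 1) = ε * 2⁻¹ ^ (i + 1)
          rw [div_eq_mul_inv, ENNReal.inv_pow]
        have h4 : ∑' i : ℕ, (2⁻¹ : ℝ≥0∞) ^ (i + 1) = 1 := by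
          simp_rw [pow_succ]
          rw [ENNReal.tsum_mul_right, ENNReal.tsum_geometric, ENNReal.one_sub_inv_two,
            inv_inv]
          exact ENNReal.mul_inv_cancel two_ne_zero ENNReal.ofNat_ne_top
        calc ∑' i, δ i = ∑' i : ℕ, ε * 2⁻¹ ^ (i + 1) := tsum_congr h3
          _ = ε * ∑' i : ℕ, (2⁻¹ : ℝ≥0∞) ^ (i + 1) := ENNReal.tsum_mul_left
          _ = ε := by rw [h4, mul_one]
      exact h1.trans_eq h2
    set n : ℕ → ℕ := auxN μ f m c with hndef
    have inv : ∀ k, m ≤ μ (f '' {x : ℕ → ℕ | ∀ i < k, x i ≤ n i}) + c k :=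
      aux_invariant μ f δ hδ0
    set E : ℕ → Set (ℕ → ℕ) := fun k => {x : ℕ → ℕ | ∀ i < k, x i ≤ n i} with hEdef
    set C : Set (ℕ → ℕ) := Set.univ.pi (fun i => Set.Iic (n i)) with hCdef
    have hC : IsCompact C := isCompact_univ_pi fun i => (Set.finite_Iic (n i)).isCompact
    set F : Set X := ⋂ k, closure (f '' E k) with hFdef
    have hFclosed : IsClosed F := isClosed_iInter fun k => isClosed_closure
    have hEanti : Antitone E := by
      intro k l hkl x hx i hi
      exact hx i (lt_of_lt_of_le hi hkl)
    have hFsub : F ⊆ Set.range f := by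
      intro y hy
      have hy' : ∀ k, y ∈ closure (f '' E k) := fun k => Set.mem_iInter.1 hy k
      have hex : ∀ k : ℕ, ∃ x, x ∈ E k ∧ dist y (f x) < 1 / (k + 1) := by
        intro k
        obtain ⟨z, hz, hzd⟩ := Metric.mem_closure_iff.1 (hy' k) (1 / (k + 1)) (by positivity)
        obtain ⟨x, hx, rfl⟩ := hz
        exact ⟨x, hx, hzd⟩
      choose x hxE hxd using hex
      set t : ℕ → ℕ → ℕ := fun k i => min (x k i) (n i) with htdef
      have htC : ∀ k, t k ∈ C := fun k i _ => Set.mem_Iic.2 (min_le_right _ _)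
      obtain ⟨a, haC, φ, hφ, hta⟩ := hC.tendsto_subseq htC
      have hxa : Filter.Tendsto (fun j => x (φ j)) Filter.atTop (nhds a) := by
        rw [tendsto_pi_nhds]
        intro i
        have h1 : Filter.Tendsto (fun j => t (φ j) i) Filter.atTop (nhds (a i)) :=
          tendsto_pi_nhds.1 hta i
        refine Filter.Tendsto.congr' ?_ h1
        filter_upwards [Filter.eventually_gt_atTop i] with j hj
        have hij : i < φ j := lt_of_lt_of_le hj hφ.le_apply
        exact min_eq_left (hxE (φ j) i hij)
      have hfa := (hf.tendsto a).comp hxa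
      have hfy : Filter.Tendsto (fun k => f (x k)) Filter.atTop (nhds y) := by
        rw [tendsto_iff_dist_tendsto_zero]
        refine squeeze_zero (fun k => dist_nonneg) (fun k => ?_)
          tendsto_one_div_add_atTop_nhds_zero_nat
        rw [dist_comm]
        exact (hxd k).le
      have hkey := tendsto_nhds_unique (hfy.comp hφ.tendsto_atTop) hfa
      exact ⟨a, hkey.symm⟩
    have hμF : m ≤ μ F + ε := by
      have hclosanti : Antitone fun k => closure (f '' E k) := fun k l hkl =>
        closure_mono (Set.image_mono (hEanti hkl))
      have h1 : μ F = ⨅ k, μ (closure (f '' E k)) :=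
        hclosanti.measure_iInter (fun k => isClosed_closure.measurableSet.nullMeasurableSet)
          ⟨0, measure_ne_top μ _⟩
      rw [h1, ENNReal.iInf_add]
      refine le_iInf fun k => ?_
      calc m ≤ μ (f '' E k) + c k := inv k
        _ ≤ μ (closure (f '' E k)) + ε :=
          add_le_add (measure_mono subset_closure) (hcε k)
    exact ⟨F, hFclosed, hFsub, hμF⟩
  choose F hFc hFsub hFle using fun j : ℕ =>
    claim ((j : ℝ≥0∞))⁻¹ (ENNReal.inv_ne_zero.2 (ENNReal.natCast_ne_top j))
  set T := ⋃ j, F j with hT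
  have hTm : MeasurableSet T := MeasurableSet.iUnion fun j => (hFc j).measurableSet
  have hTsub : T ⊆ Set.range f := Set.iUnion_subset hFsub
  have hle : μ (Set.range f) ≤ μ T := by
    refine ENNReal.le_of_forall_pos_le_add fun ε hε _ => ?_
    obtain ⟨n, hn⟩ := ENNReal.exists_inv_nat_lt
      (show ((ε : ℝ≥0∞)) ≠ 0 by exact_mod_cast hε.ne')
    calc μ (Set.range f) ≤ μ (F n) + ((n : ℝ≥0∞))⁻¹ := hFle n
      _ ≤ μ T + ε := add_le_add (measure_mono (Set.subset_iUnion F n)) hn.le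
  have hnull : μ (Set.range f \ T) = 0 := by
    refine measure_mono_null (Set.diff_subset_diff_left (subset_toMeasurable μ _)) ?_
    have hTsub' : T ⊆ toMeasurable μ (Set.range f) := hTsub.trans (subset_toMeasurable _ _)
    rw [measure_diff hTsub' hTm.nullMeasurableSet (measure_ne_top μ T), measure_toMeasurable]
    exact tsub_eq_zero_of_le hle
  have hdecomp : Set.range f = T ∪ (Set.range f \ T) := (Set.union_diff_cancel hTsub).symm
  rw [hdecomp]
  exact hTm.nullMeasurableSet.union (NullMeasurableSet.of_null hnull)

/-- For every Borel set `A` in `[0,1]^d` and every `K ⊆ [d]`, the cylinder `[A]_K`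
is Lebesgue measurable (lies in the completion of the Borel σ-algebra w.r.t. Lebesgue measure). -/

theorem cylinder_nullMeasurable (d : ℕ) (A : Set (Fin d → I)) (hA : MeasurableSet A)
    (K : Set (Fin d)) :
    NullMeasurableSet (cyl A K) (volume : Measure (Fin d → I)) := by
  haveI : DecidablePred (· ∈ K) := Classical.decPred _
  set res : (Fin d → I) → (↥K → I) := fun ω i => ω i with hres
  have hcyl : cyl A K = (res ⁻¹' (res '' Aᶜ))ᶜ := by
    ext ω
    constructor
    · intro h hmem
      obtain ⟨ω', hω', heq⟩ := hmem
      exact hω' (h ω' fun i hi => congrFun heq ⟨i, hi⟩)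
    · intro h ω' hagree
      by_contra hA'
      exact h ⟨ω', hA', funext fun i => hagree i i.2⟩
  rw [hcyl]
  have hres_cont : Continuous res := continuous_pi fun i => continuous_apply (i : Fin d)
  have hB : AnalyticSet (res '' Aᶜ) := (hA.compl.analyticSet).image_of_continuous hres_cont
  have hBnm : NullMeasurableSet (res '' Aᶜ) (volume : Measure (↥K → I)) :=
    analyticSet_nullMeasurableSet hB volume
  have hqmp : Measure.QuasiMeasurePreserving res (volume : Measure (Fin d → I))
      (volume : Measure (↥K → I)) := by
    have h1 := MeasureTheory.volume_preserving_piEquivPiSubtypeProd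
      (fun _ : Fin d => I) (· ∈ K)
    have h2 : Measure.QuasiMeasurePreserving
        (Prod.fst : ((∀ _ : {i // i ∈ K}, I) × (∀ _ : {i // ¬ i ∈ K}, I)) → (∀ _ : {i // i ∈ K}, I))
        volume volume := by
      rw [Measure.volume_eq_prod]
      exact Measure.quasiMeasurePreserving_fst
    exact h2.comp h1.quasiMeasurePreserving
  exact ((hBnm.preimage hqmp).compl)
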